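/- Let X ∈ C^{k̃}(2𝕋^d, SL(2,ℝ)) satisfy X(θ+α)^{−1} S^V_{E_m^+}(θ) X(θ) = [[1,ζ],[0,1]] with ζ > 0. Then for any κ ∈ (0,1/4), if ‖X‖_{k̃} ζ^{κ/2} ≤ 1/4, the following hold: 0 < [X₁₁²]/([X₁₁²][X₁₂²] − [X₁₁X₁₂]²) ≤ (1/2)ζ^{−κ} and [X₁₁²][X₁₂²] − [X₁₁X₁₂]² ≥ 8ζ^{2κ}. -/

import Mathlib

open MeasureTheory Real
open scoped ENNReal BigOperators Classical

attribute [local instance] Matrix.normedAddCommGroup Matrix.normedSpace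

noncomputable section

namespace QPS

/-- `α ∈ DC_d(γ,τ)`: the Diophantine condition
`inf_l |⟨n,α⟩ - l| ≥ γ/|n|^τ` for all `n ∈ ℤ^d ∖ {0}`. -/
def DiophCond (d : ℕ) (γ τ : ℝ) (α : Fin d → ℝ) : Prop :=
  ∀ n : Fin d → ℤ, n ≠ 0 → ∀ l : ℤ,
    γ / ‖n‖ ^ τ ≤ |(∑ i, (n i : ℝ) * α i) - l|

/-- distance to the nearest integer, `‖x‖_{ℝ/ℤ}`. -/
def distToZ (x : ℝ) : ℝ := |x - round x|

/-- `f` is `ℤ^d`-periodic, i.e. a function on the torus `𝕋^d`. -/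
def Zperiodic {d : ℕ} {X : Type*} (f : (Fin d → ℝ) → X) : Prop :=
  ∀ θ : Fin d → ℝ, ∀ n : Fin d → ℤ, f (θ + fun i => (n i : ℝ)) = f θ

/-- `f` is `(2ℤ)^d`-periodic, i.e. a function on the torus `2𝕋^d = (ℝ/2ℤ)^d`. -/
def Z2periodic {d : ℕ} {X : Type*} (f : (Fin d → ℝ) → X) : Prop :=
  ∀ θ : Fin d → ℝ, ∀ n : Fin d → ℤ, f (θ + fun i => 2 * (n i : ℝ)) = f θ

/-- The `C^k` norm `‖F‖_k = sup_{|j| ≤ k, θ} ‖∂^j F(θ)‖`. -/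
def CkNorm {d : ℕ} {E : Type*} [NormedAddCommGroup E] [NormedSpace ℝ E]
    (k : ℕ) (f : (Fin d → ℝ) → E) : ℝ :=
  ⨆ p : Fin (k + 1) × (Fin d → ℝ), ‖iteratedFDeriv ℝ p.1 f p.2‖

/-- The rotation matrix `R_φ` by angle `2πφ`. -/
def Rot (φ : ℝ) : Matrix (Fin 2) (Fin 2) ℝ :=
  !![Real.cos (2 * π * φ), -Real.sin (2 * π * φ);
     Real.sin (2 * π * φ),  Real.cos (2 * π * φ)]

/-- The unit vector of angle `2πy` on the circle. -/
def unitVec (y : ℝ) : Fin 2 → ℝ := ![Real.cos (2 * π * y), Real.sin (2 * π * y)]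

/-- The Euclidean norm on `ℝ²`. -/
def enorm2 (v : Fin 2 → ℝ) : ℝ := Real.sqrt (v 0 ^ 2 + v 1 ^ 2)

/-- `ψ` is a lift of the projectivized cocycle of `A`: it is continuous, `ℤ^d`-periodic in the
base, `ℤ`-periodic in the fibre, and `y ↦ y + ψ_θ(y)` covers the projective action of `A(θ)`
on the circle. -/
def IsLift {d : ℕ} (A : (Fin d → ℝ) → Matrix (Fin 2) (Fin 2) ℝ)
    (ψ : (Fin d → ℝ) → ℝ → ℝ) : Prop :=
  Continuous (fun p : (Fin d → ℝ) × ℝ => ψ p.1 p.2) ∧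
  (∀ θ, ∀ n : Fin d → ℤ, ∀ y, ψ (θ + fun i => (n i : ℝ)) y = ψ θ y) ∧
  (∀ θ y, ψ θ (y + 1) = ψ θ y) ∧
  (∀ θ y, unitVec (y + ψ θ y) =
    (enorm2 ((A θ).mulVec (unitVec y)))⁻¹ • (A θ).mulVec (unitVec y))

/-- `ρ` is a fibered rotation number of the cocycle `(α, A)`: there are a lift `ψ` of the
projectivized cocycle and a probability measure `μ` on `𝕋^d × 𝕊¹` (realized on the
fundamental domain via fractional parts) invariant under the induced map and projecting to
Lebesgue measure on `𝕋^d`, such that `ρ = ∫ ψ dμ`. -/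
def IsFiberedRotationNumber {d : ℕ} (α : Fin d → ℝ)
    (A : (Fin d → ℝ) → Matrix (Fin 2) (Fin 2) ℝ) (ρ : ℝ) : Prop :=
  ∃ ψ : (Fin d → ℝ) → ℝ → ℝ, IsLift A ψ ∧
    ∃ μ : Measure ((Fin d → ℝ) × ℝ), IsProbabilityMeasure μ ∧
      μ.map (fun p : (Fin d → ℝ) × ℝ =>
        ((fun i => Int.fract (p.1 i + α i)), Int.fract (p.2 + ψ p.1 p.2))) = μ ∧
      μ.map Prod.fst = volume.restrict (Set.univ.pi fun _ : Fin d => Set.Ico (0:ℝ) 1) ∧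
      ρ = ∫ p, ψ p.1 p.2 ∂μ

/-- `A : 𝕋^d → SL(2,ℝ)` is homotopic to the identity. -/
def HomotopicToId {d : ℕ} (A : (Fin d → ℝ) → Matrix (Fin 2) (Fin 2) ℝ) : Prop :=
  ∃ H : ℝ → (Fin d → ℝ) → Matrix (Fin 2) (Fin 2) ℝ,
    Continuous (fun p : ℝ × (Fin d → ℝ) => H p.1 p.2) ∧
    (∀ t, Zperiodic (H t) ∧ ∀ θ, (H t θ).det = 1) ∧
    H 0 = A ∧ H 1 = fun _ => (1 : Matrix (Fin 2) (Fin 2) ℝ)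

/-- `B : 2𝕋^d → SL(2,ℝ)` has degree `n`, i.e. it is homotopic to
`θ ↦ R_{⟨n,θ⟩/2}`. -/
def HasDegree {d : ℕ} (B : (Fin d → ℝ) → Matrix (Fin 2) (Fin 2) ℝ) (n : Fin d → ℤ) : Prop :=
  ∃ H : ℝ → (Fin d → ℝ) → Matrix (Fin 2) (Fin 2) ℝ,
    Continuous (fun p : ℝ × (Fin d → ℝ) => H p.1 p.2) ∧
    (∀ t, Z2periodic (H t) ∧ ∀ θ, (H t θ).det = 1) ∧
    H 0 = B ∧ H 1 = fun θ => Rot ((∑ i, (n i : ℝ) * θ i) / 2)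

/-- The Schrödinger cocycle matrix `S^V_E(θ)`. -/
def schrodingerMat {d : ℕ} (V : (Fin d → ℝ) → ℝ) (E : ℝ) (θ : Fin d → ℝ) :
    Matrix (Fin 2) (Fin 2) ℝ := !![E - V θ, -1; 1, 0]

/-- The average `[g]` of a function on the torus `2𝕋^d`. -/
def avg2 {d : ℕ} (g : (Fin d → ℝ) → ℝ) : ℝ :=
  ((2 : ℝ) ^ d)⁻¹ * ∫ θ in Set.Icc (0 : Fin d → ℝ) (fun _ => 2), g θ

end QPS

open QPS

section GapAux

open Set

variable {d : ℕ}

/-! ### Translation of iterated derivatives -/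

variable {E' F' : Type*} [NormedAddCommGroup E'] [NormedSpace ℝ E']
  [NormedAddCommGroup F'] [NormedSpace ℝ F']

theorem fderiv_shift (g : E' → F') (v x : E') :
    fderiv ℝ (fun y => g (y + v)) x = fderiv ℝ g (x + v) := by
  by_cases h : DifferentiableAt ℝ g (x + v)
  · have h2 : HasFDerivAt (fun y : E' => y + v) (ContinuousLinearMap.id ℝ E') x :=
      (hasFDerivAt_id x).add_const v
    have := (h.hasFDerivAt.comp x h2).fderiv
    simpa [Function.comp_def] using this
  · rw [fderiv_zero_of_not_differentiableAt h, fderiv_zero_of_not_differentiableAt]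
    intro hc
    apply h
    have h2 : DifferentiableAt ℝ (fun z : E' => z - v) (x + v) :=
      (differentiable_id.sub_const v).differentiableAt
    have hc' : DifferentiableAt ℝ (fun y => g (y + v)) (x + v - v) := by
      simpa using hc
    have h3 := hc'.comp (x + v) h2
    have : ((fun y => g (y + v)) ∘ fun z : E' => z - v) = g := by
      funext z; simp [Function.comp]
    rwa [this] at h3

theorem iteratedFDeriv_shift (n : ℕ) (g : E' → F') (v : E') :
    ∀ x, iteratedFDeriv ℝ n (fun y => g (y + v)) x = iteratedFDeriv ℝ n g (x + v) := by
  induction n with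
  | zero => intro x; ext m; simp [iteratedFDeriv_zero_apply]
  | succ n ih =>
    intro x
    ext m
    rw [iteratedFDeriv_succ_apply_left, iteratedFDeriv_succ_apply_left]
    have hfe : (iteratedFDeriv ℝ n fun y => g (y + v))
        = fun y => iteratedFDeriv ℝ n g (y + v) := funext ih
    rw [hfe, fderiv_shift (iteratedFDeriv ℝ n g) v x]

/-! ### The lattice `(2ℤ)^d` and fundamental domains -/

def latHom (d : ℕ) : (Fin d → ℤ) →+ (Fin d → ℝ) :=
  AddMonoidHom.mk' (fun n => fun i => 2 * (n i : ℝ))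
    (by intro a b; funext i; simp [Pi.add_apply]; ring)

def lat (d : ℕ) : AddSubgroup (Fin d → ℝ) := (latHom d).range

instance : Countable (lat d) :=
  (latHom d).rangeRestrict_surjective.countable

def boxI (a : Fin d → ℝ) : Set (Fin d → ℝ) := univ.pi fun i => Ico (a i) (a i + 2)

lemma lat_vadd (g : lat d) (x : Fin d → ℝ) : g +ᵥ x = (g : Fin d → ℝ) + x := rfl

lemma latHom_apply (n : Fin d → ℤ) (i : Fin d) : latHom d n i = 2 * (n i : ℝ) := rfl

lemma mem_boxI {a x : Fin d → ℝ} : x ∈ boxI a ↔ ∀ i, a i ≤ x i ∧ x i < a i + 2 := by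
  simp [boxI, mem_Ico]

lemma isFD (a : Fin d → ℝ) : IsAddFundamentalDomain (lat d) (boxI a) volume := by
  refine IsAddFundamentalDomain.mk'
    ((MeasurableSet.univ_pi fun i => measurableSet_Ico).nullMeasurableSet) (fun x => ?_)
  have key : ∀ (n : Fin d → ℤ) (i : Fin d),
      ((⟨latHom d n, ⟨n, rfl⟩⟩ : lat d) +ᵥ x) i = 2 * (n i : ℝ) + x i := by
    intro n i; rw [lat_vadd]; rfl
  refine ⟨⟨latHom d (fun i => ⌈(a i - x i)/2⌉), ⟨_, rfl⟩⟩, ?_, ?_⟩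
  · show _ +ᵥ x ∈ boxI a
    rw [mem_boxI]
    intro i
    rw [key]
    have h1 := Int.le_ceil ((a i - x i)/2)
    have h2 := Int.ceil_lt_add_one ((a i - x i)/2)
    constructor <;> linarith
  · rintro ⟨g, n, rfl⟩ hg
    have hg' : ∀ i, a i ≤ 2 * (n i : ℝ) + x i ∧ 2 * (n i : ℝ) + x i < a i + 2 := by
      intro i
      have := (mem_boxI.mp hg) i
      rwa [key] at this
    apply Subtype.ext
    funext i
    show latHom d n i = latHom d (fun i => ⌈(a i - x i)/2⌉) i
    rw [latHom_apply, latHom_apply]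
    have hc1 := hg' i
    set m : ℤ := ⌈(a i - x i)/2⌉ with hm
    have h1 := Int.le_ceil ((a i - x i)/2)
    have h2 := Int.ceil_lt_add_one ((a i - x i)/2)
    rw [← hm] at h1 h2
    have hlt1 : (n i : ℝ) < (m : ℝ) + 1 := by linarith [hc1.1, hc1.2]
    have hlt2 : (m : ℝ) < (n i : ℝ) + 1 := by linarith [hc1.1, hc1.2]
    have e1 : n i < m + 1 := by exact_mod_cast hlt1
    have e2 : m < n i + 1 := by exact_mod_cast hlt2
    have : n i = m := by omega
    rw [this]

lemma boxae : (Icc (0:Fin d → ℝ) (fun _ => 2)) =ᵐ[(volume : Measure (Fin d → ℝ))]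
    boxI (0 : Fin d → ℝ) := by
  rw [MeasureTheory.ae_eq_set]
  constructor
  · have hsub : Icc (0:Fin d → ℝ) (fun _ => 2) \ boxI 0 ⊆ ⋃ i, {x : Fin d → ℝ | x i = 2} := by
      rintro x ⟨hx1, hx2⟩
      rw [mem_boxI] at hx2
      push_neg at hx2
      obtain ⟨i, hi⟩ := hx2
      have h0 : (0:Fin d → ℝ) ≤ x := hx1.1
      have h2 : x ≤ (fun _ => 2) := hx1.2
      have hxi : x i = 2 := by
        have h0i := h0 i
        have h2i := h2 i
        have := hi (by simpa using h0 i)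
        simp only [Pi.zero_apply] at *
        linarith
      exact mem_iUnion.2 ⟨i, hxi⟩
    refine measure_mono_null hsub (measure_iUnion_null fun i => ?_)
    rw [MeasureTheory.volume_pi]
    exact MeasureTheory.Measure.pi_hyperplane _ i 2
  · have : boxI (0 : Fin d → ℝ) \ Icc 0 (fun _ => 2) = ∅ := by
      rw [diff_eq_empty]
      intro x hx
      rw [mem_boxI] at hx
      constructor
      · intro i; simpa using (hx i).1
      · intro i
        have := (hx i).2
        simp only [Pi.zero_apply] at this
        show x i ≤ 2
        linarith
    rw [this]
    simp

lemma integral_box_shift (h : (Fin d → ℝ) → ℝ) (hp : Z2periodic h) (α : Fin d → ℝ) :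
    ∫ θ in Icc (0:Fin d → ℝ) (fun _ => 2), h (θ + α)
      = ∫ θ in Icc (0:Fin d → ℝ) (fun _ => 2), h θ := by
  haveI : VAddInvariantMeasure (lat d) (Fin d → ℝ) volume :=
    ⟨fun c s _ => measure_preimage_add _ _ _⟩
  have hpre : (fun x : Fin d → ℝ => x + α) ⁻¹' (boxI 0) = boxI (fun i => -α i) := by
    ext x
    simp only [mem_preimage, mem_boxI, Pi.add_apply, Pi.zero_apply]
    constructor
    · intro hx i; have := hx i; constructor <;> linarith [this.1, this.2]
    · intro hx i; have := hx i; constructor <;> linarith [this.1, this.2]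
  calc ∫ θ in Icc (0:Fin d → ℝ) (fun _ => 2), h (θ + α)
      = ∫ θ in boxI (0 : Fin d → ℝ), h (θ + α) := setIntegral_congr_set boxae
    _ = ∫ θ in boxI (fun i => -α i), h (θ + α) := by
        refine (isFD 0).setIntegral_eq (isFD (fun i => -α i)) ?_
        rintro ⟨g, n, rfl⟩ x
        rw [lat_vadd]
        show h (((latHom d n) + x) + α) = h (x + α)
        have heq : ((latHom d n) + x) + α = (x + α) + fun i => 2 * (n i : ℝ) := by
          funext i; simp [latHom_apply, Pi.add_apply]; ring
        rw [heq, hp]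
    _ = ∫ θ in boxI (0 : Fin d → ℝ), h θ := by
        rw [← hpre]
        exact (measurePreserving_add_right volume α).setIntegral_preimage_emb
          (MeasurableEquiv.addRight α).measurableEmbedding h _
    _ = ∫ θ in Icc (0:Fin d → ℝ) (fun _ => 2), h θ := setIntegral_congr_set boxae.symm

/-! ### Lemmas about `avg2` -/

lemma integrableOn_box {h : (Fin d → ℝ) → ℝ} (hc : Continuous h) :
    MeasureTheory.IntegrableOn h (Icc (0:Fin d → ℝ) (fun _ => 2)) volume :=
  hc.continuousOn.integrableOn_compact isCompact_Icc

lemma volume_box_toReal :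
    (volume (Icc (0:Fin d → ℝ) (fun _ => 2))).toReal = 2 ^ d := by
  rw [Real.volume_Icc_pi_toReal (fun i => by norm_num)]
  simp

lemma avg2_const (r : ℝ) : avg2 (fun _ : Fin d → ℝ => r) = r := by
  unfold avg2
  rw [MeasureTheory.setIntegral_const, MeasureTheory.measureReal_def, volume_box_toReal, smul_eq_mul]
  rw [← mul_assoc, inv_mul_cancel₀ (by positivity : ((2:ℝ)^d) ≠ 0), one_mul]

lemma avg2_add {h1 h2 : (Fin d → ℝ) → ℝ} (i1 : MeasureTheory.IntegrableOn h1
      (Icc (0:Fin d → ℝ) (fun _ => 2)) volume)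
    (i2 : MeasureTheory.IntegrableOn h2 (Icc (0:Fin d → ℝ) (fun _ => 2)) volume) :
    avg2 (fun θ => h1 θ + h2 θ) = avg2 h1 + avg2 h2 := by
  unfold avg2
  rw [MeasureTheory.integral_add i1 i2]
  ring

lemma avg2_sub {h1 h2 : (Fin d → ℝ) → ℝ} (i1 : MeasureTheory.IntegrableOn h1
      (Icc (0:Fin d → ℝ) (fun _ => 2)) volume)
    (i2 : MeasureTheory.IntegrableOn h2 (Icc (0:Fin d → ℝ) (fun _ => 2)) volume) :
    avg2 (fun θ => h1 θ - h2 θ) = avg2 h1 - avg2 h2 := by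
  unfold avg2
  rw [MeasureTheory.integral_sub i1 i2]
  ring

lemma avg2_mul_left (r : ℝ) (h : (Fin d → ℝ) → ℝ) :
    avg2 (fun θ => r * h θ) = r * avg2 h := by
  unfold avg2
  rw [MeasureTheory.integral_const_mul]
  ring

lemma avg2_nonneg {h : (Fin d → ℝ) → ℝ} (hh : ∀ θ, 0 ≤ h θ) : 0 ≤ avg2 h := by
  unfold avg2
  have : 0 ≤ ∫ θ in Icc (0:Fin d → ℝ) (fun _ => 2), h θ :=
    MeasureTheory.setIntegral_nonneg measurableSet_Icc (fun θ _ => hh θ)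
  positivity

lemma avg2_le {h : (Fin d → ℝ) → ℝ} {K : ℝ}
    (hint : MeasureTheory.IntegrableOn h (Icc (0:Fin d → ℝ) (fun _ => 2)) volume)
    (hb : ∀ θ, h θ ≤ K) : avg2 h ≤ K := by
  have h2 : avg2 (fun θ => K - h θ) ≥ 0 := avg2_nonneg (fun θ => by linarith [hb θ])
  have h3 := avg2_sub (h1 := fun _ => K) (h2 := h)
    (MeasureTheory.integrableOn_const isCompact_Icc.measure_lt_top.ne) hint
  rw [h3, avg2_const] at h2
  linarith

lemma abs_avg2_le {h : (Fin d → ℝ) → ℝ} {K : ℝ}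
    (hint : MeasureTheory.IntegrableOn h (Icc (0:Fin d → ℝ) (fun _ => 2)) volume)
    (hb : ∀ θ, |h θ| ≤ K) : |avg2 h| ≤ K := by
  rw [abs_le]
  constructor
  · have h1 : avg2 (fun θ => h θ - (-K)) ≥ 0 :=
      avg2_nonneg (fun θ => by have := (abs_le.mp (hb θ)).1; linarith)
    have h3 := avg2_sub (h1 := h) (h2 := fun _ => (-K)) hint
      (MeasureTheory.integrableOn_const isCompact_Icc.measure_lt_top.ne)
    rw [h3, avg2_const] at h1
    linarith
  · exact avg2_le hint (fun θ => (abs_le.mp (hb θ)).2)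

lemma avg2_cs {u v : (Fin d → ℝ) → ℝ} (hu : Continuous u) (hv : Continuous v) :
    (avg2 (fun θ => u θ * v θ))^2 ≤ avg2 (fun θ => u θ^2) * avg2 (fun θ => v θ^2) := by
  set Iu : ℝ := ∫ θ in Icc (0:Fin d → ℝ) (fun _ => 2), u θ^2 with hIu
  set Iv : ℝ := ∫ θ in Icc (0:Fin d → ℝ) (fun _ => 2), v θ^2 with hIv
  set Iuv : ℝ := ∫ θ in Icc (0:Fin d → ℝ) (fun _ => 2), u θ * v θ with hIuv
  have hq : ∀ t : ℝ, 0 ≤ Iu * (t * t) + (2 * Iuv) * t + Iv := by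
    intro t
    have h1 : (0:ℝ) ≤ ∫ θ in Icc (0:Fin d → ℝ) (fun _ => 2), (t * u θ + v θ)^2 :=
      MeasureTheory.setIntegral_nonneg measurableSet_Icc (fun θ _ => sq_nonneg _)
    have h2 : (fun θ : Fin d → ℝ => (t * u θ + v θ)^2)
        = fun θ => (t*t) * u θ^2 + ((2*t) * (u θ * v θ) + v θ^2) := by
      funext θ; ring
    rw [h2] at h1
    rw [MeasureTheory.integral_add, MeasureTheory.integral_add,
      MeasureTheory.integral_const_mul, MeasureTheory.integral_const_mul] at h1
    · rw [← hIu, ← hIv, ← hIuv] at h1; nlinarith [h1]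
    · exact (integrableOn_box (continuous_const.mul (hu.mul hv)))
    · exact (integrableOn_box (hv.pow 2))
    · exact (integrableOn_box (continuous_const.mul (hu.pow 2)))
    · exact ((integrableOn_box (continuous_const.mul (hu.mul hv))).add
        (integrableOn_box (hv.pow 2)))
  have hd := discrim_le_zero hq
  rw [discrim] at hd
  have hkey : Iuv^2 ≤ Iu * Iv := by nlinarith [hd]
  show (((2:ℝ)^d)⁻¹ * Iuv)^2 ≤ (((2:ℝ)^d)⁻¹ * Iu) * (((2:ℝ)^d)⁻¹ * Iv)
  have hc : (0:ℝ) ≤ ((2:ℝ)^d)⁻¹ := by positivity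
  nlinarith [hkey, sq_nonneg (((2:ℝ)^d)⁻¹)]

lemma avg2_shift {h : (Fin d → ℝ) → ℝ} (hp : Z2periodic h) (α : Fin d → ℝ) :
    avg2 (fun θ => h (θ + α)) = avg2 h := by
  unfold avg2
  rw [integral_box_shift h hp α]

end GapAux


/-- **Averages of the conjugacy at a gap edge.**
If `X ∈ C^{k̃}(2𝕋^d, SL(2,ℝ))` conjugates the Schrödinger cocycle at `E_m^+` to
`[[1,ζ],[0,1]]` with `ζ > 0`, then for any `κ ∈ (0,1/4)` with `‖X‖_{k̃} ζ^{κ/2} ≤ 1/4`: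
`0 < [X₁₁²]/([X₁₁²][X₁₂²] - [X₁₁X₁₂]²) ≤ (1/2) ζ^{-κ}` and
`[X₁₁²][X₁₂²] - [X₁₁X₁₂]² ≥ 8 ζ^{2κ}`. -/
theorem averages_estimates_at_gap_edge
    (d : ℕ) (α : Fin d → ℝ) (V : (Fin d → ℝ) → ℝ) (E ζ κ : ℝ)
    (kt : ℕ) (X : (Fin d → ℝ) → Matrix (Fin 2) (Fin 2) ℝ)
    (hX : ContDiff ℝ kt X) (hXp : Z2periodic X) (hXdet : ∀ θ, (X θ).det = 1)
    (hζ : 0 < ζ)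
    (hconj : ∀ θ, (X (θ + α))⁻¹ * schrodingerMat V E θ * X θ = !![1, ζ; 0, 1])
    (hκ0 : 0 < κ) (hκ : κ < 1 / 4)
    (hsmall : CkNorm kt X * ζ ^ (κ / 2) ≤ 1 / 4) :
    (0 < avg2 (fun θ => X θ 0 0 ^ 2) /
        (avg2 (fun θ => X θ 0 0 ^ 2) * avg2 (fun θ => X θ 0 1 ^ 2) -
          avg2 (fun θ => X θ 0 0 * X θ 0 1) ^ 2)) ∧
    (avg2 (fun θ => X θ 0 0 ^ 2) /
        (avg2 (fun θ => X θ 0 0 ^ 2) * avg2 (fun θ => X θ 0 1 ^ 2) -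
          avg2 (fun θ => X θ 0 0 * X θ 0 1) ^ 2) ≤ 1 / 2 * ζ ^ (-κ)) ∧
    (8 * ζ ^ (2 * κ) ≤
      avg2 (fun θ => X θ 0 0 ^ 2) * avg2 (fun θ => X θ 0 1 ^ 2) -
        avg2 (fun θ => X θ 0 0 * X θ 0 1) ^ 2) := by
  classical
  -- Notation for the three averages
  set A := avg2 (fun θ => X θ 0 0 ^ 2) with hAdef
  set B := avg2 (fun θ => X θ 0 0 * X θ 0 1) with hBdef
  set C := avg2 (fun θ => X θ 0 1 ^ 2) with hCdef
  set M : ℝ := CkNorm kt X with hMdef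
  -- continuity of entries
  have hXc : Continuous X := hX.continuous
  have hentry : ∀ i j : Fin 2, Continuous fun θ => X θ i j := by
    intro i j
    have hL : LipschitzWith 1 (fun A : Matrix (Fin 2) (Fin 2) ℝ => A i j) := by
      apply LipschitzWith.of_dist_le_mul
      intro A B
      rw [dist_eq_norm, dist_eq_norm]
      have h := Matrix.norm_entry_le_entrywise_sup_norm (A - B) (i := i) (j := j)
      simpa using h
    exact hL.continuous.comp hXc
  have hshiftc : Continuous fun θ : Fin d → ℝ => θ + α := continuous_id.add continuous_const
  have hentrya : ∀ i j : Fin 2, Continuous fun θ => X (θ + α) i j := fun i j =>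
    (hentry i j).comp hshiftc
  -- sup-norm bounds from `CkNorm`
  have hGbound : ∀ n : Fin (kt+1), ∃ Cb : ℝ, ∀ θ, ‖iteratedFDeriv ℝ (n : ℕ) X θ‖ ≤ Cb := by
    intro n
    have hle : ((n : ℕ) : WithTop ℕ∞) ≤ (kt : WithTop ℕ∞) := by
      exact_mod_cast Nat.lt_succ_iff.mp n.isLt
    have hcont : Continuous fun θ => iteratedFDeriv ℝ (n : ℕ) X θ :=
      hX.continuous_iteratedFDeriv hle
    obtain ⟨Cb, hCb⟩ := (isCompact_Icc (a := (0 : Fin d → ℝ))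
      (b := fun _ => 2)).exists_bound_of_continuousOn hcont.continuousOn
    refine ⟨Cb, fun θ => ?_⟩
    set m : Fin d → ℤ := fun i => ⌊θ i / 2⌋ with hm
    set b : Fin d → ℝ := θ - fun i => 2 * (m i : ℝ) with hb
    have hbmem : b ∈ Set.Icc (0 : Fin d → ℝ) (fun _ => 2) := by
      constructor
      · intro i
        have h1 := Int.floor_le (θ i / 2)
        show (0:ℝ) ≤ θ i - 2 * (m i : ℝ)
        simp only [hm]
        linarith
      · intro i
        have h2 := Int.lt_floor_add_one (θ i / 2)
        show θ i - 2 * (m i : ℝ) ≤ 2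
        simp only [hm]
        linarith
    have hper : iteratedFDeriv ℝ (n : ℕ) X θ = iteratedFDeriv ℝ (n : ℕ) X b := by
      have hθ : θ = b + fun i => 2 * (m i : ℝ) := by
        funext i
        simp [hb]
      rw [hθ, ← iteratedFDeriv_shift (n : ℕ) X (fun i => 2 * (m i : ℝ)) b]
      have : (fun y => X (y + fun i => 2 * (m i : ℝ))) = X := by
        funext y
        exact hXp y m
      rw [this]
    rw [hper]
    exact hCb _ hbmem
  choose Cb hCb using hGbound
  have hbdd : BddAbove (Set.range fun p : Fin (kt + 1) × (Fin d → ℝ) =>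
      ‖iteratedFDeriv ℝ p.1 X p.2‖) := by
    refine ⟨Finset.univ.sup' (Finset.univ_nonempty) Cb, ?_⟩
    rintro v ⟨p, rfl⟩
    exact le_trans (hCb p.1 p.2) (Finset.le_sup' Cb (Finset.mem_univ p.1))
  have hMge : ∀ θ, ‖X θ‖ ≤ M := by
    intro θ
    have h := le_ciSup hbdd ((⟨0, Nat.succ_pos kt⟩ : Fin (kt+1)), θ)
    rw [hMdef]
    unfold CkNorm
    simpa [norm_iteratedFDeriv_zero] using h
  have hent_le : ∀ θ (i j : Fin 2), |X θ i j| ≤ M := by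
    intro θ i j
    have h := Matrix.norm_entry_le_entrywise_sup_norm (X θ) (i := i) (j := j)
    rw [Real.norm_eq_abs] at h
    exact le_trans h (hMge θ)
  have hM_nonneg : 0 ≤ M := le_trans (abs_nonneg _) (hent_le 0 0 0)
  have hM1 : (1:ℝ) ≤ 2 * M ^ 2 := by
    have hdet := hXdet 0
    rw [Matrix.det_fin_two] at hdet
    have h1 : |X 0 0 0 * X 0 1 1| ≤ M * M := by
      rw [abs_mul]
      exact mul_le_mul (hent_le 0 0 0) (hent_le 0 1 1) (abs_nonneg _) hM_nonneg
    have h2 : |X 0 0 1 * X 0 1 0| ≤ M * M := by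
      rw [abs_mul]
      exact mul_le_mul (hent_le 0 0 1) (hent_le 0 1 0) (abs_nonneg _) hM_nonneg
    have h3 : (1:ℝ) ≤ |X 0 0 0 * X 0 1 1| + |X 0 0 1 * X 0 1 0| := by
      calc (1:ℝ) = |X 0 0 0 * X 0 1 1 - X 0 0 1 * X 0 1 0| := by rw [hdet]; norm_num
        _ ≤ _ := abs_sub _ _
    nlinarith only [h1, h2, h3]
  -- facts about ζ
  set s : ℝ := ζ ^ (κ / 2) with hsdef
  have hspos : 0 < s := Real.rpow_pos_of_pos hζ _
  have hMs : M * s ≤ 1 / 4 := hsmall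
  have hζ1 : ζ ≤ 1 := by
    by_contra hcon
    push_neg at hcon
    have h1 : (1:ℝ) ≤ s := Real.one_le_rpow hcon.le (by linarith)
    have h2 : M * 1 ≤ M * s := mul_le_mul_of_nonneg_left h1 hM_nonneg
    nlinarith only [h2, hMs, hM_nonneg, hM1]
  have hM2s2 : M ^ 2 * s ^ 2 ≤ 1 / 16 := by
    have h := mul_le_mul hMs hMs (mul_nonneg hM_nonneg hspos.le) (by norm_num)
    nlinarith only [h]
  have hsκ : ζ ^ κ = s ^ 2 := by
    rw [hsdef, ← Real.rpow_natCast (ζ ^ (κ/2)) 2, ← Real.rpow_mul hζ.le]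
    norm_num
  have hsκpos : (0:ℝ) < ζ ^ κ := Real.rpow_pos_of_pos hζ _
  have hζM2 : ζ * M ^ 2 ≤ 1 / 16 := by
    have h1 : ζ ^ (1 - κ) * ζ ^ κ = ζ := by
      rw [← Real.rpow_add hζ]
      norm_num
    have h1κ : ζ ^ (1 - κ) ≤ 1 := Real.rpow_le_one hζ.le hζ1 (by linarith)
    have h1κ' : (0:ℝ) ≤ ζ ^ (1 - κ) := (Real.rpow_pos_of_pos hζ _).le
    have h2 : ζ ^ κ * M ^ 2 ≤ 1 / 16 := by rw [hsκ]; linarith only [hM2s2]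
    calc ζ * M ^ 2 = ζ ^ (1 - κ) * (ζ ^ κ * M ^ 2) := by rw [← mul_assoc, h1]
      _ ≤ 1 * (1 / 16) := by
          apply mul_le_mul h1κ h2 _ (by norm_num)
          positivity
      _ = 1 / 16 := by norm_num
  -- the conjugacy identity, entrywise
  have key : ∀ θ, schrodingerMat V E θ * X θ = X (θ + α) * !![1, ζ; 0, 1] := by
    intro θ
    have hu : IsUnit (X (θ + α)).det := by rw [hXdet]; exact isUnit_one
    rw [← hconj θ, ← Matrix.mul_assoc, Matrix.mul_nonsing_inv_cancel_left _ _ hu]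
  have e1011 : ∀ θ, X θ 0 0 = X (θ + α) 1 0 ∧
      X θ 0 1 = X (θ + α) 1 0 * ζ + X (θ + α) 1 1 := by
    intro θ
    have h0 := congrFun (congrFun (key θ) 1) 0
    have h1 := congrFun (congrFun (key θ) 1) 1
    simp [schrodingerMat, Matrix.mul_apply, Fin.sum_univ_two] at h0 h1
    constructor
    · linarith
    · linarith
  have star : ∀ θ, X (θ + α) 0 0 * X θ 0 1 - X θ 0 0 * X (θ + α) 0 1
      = 1 + ζ * (X θ 0 0 * X (θ + α) 0 0) := by
    intro θ
    have hdet := hXdet (θ + α)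
    rw [Matrix.det_fin_two] at hdet
    have h10 := (e1011 θ).1
    have h11 := (e1011 θ).2
    -- X (θ+α) 1 0 = X θ 0 0 ; X (θ+α) 1 1 = X θ 0 1 - ζ * X θ 0 0
    have h11' : X (θ + α) 1 1 = X θ 0 1 - X θ 0 0 * ζ := by rw [h11, ← h10]; ring
    calc X (θ + α) 0 0 * X θ 0 1 - X θ 0 0 * X (θ + α) 0 1
        = X (θ + α) 0 0 * (X (θ + α) 1 1 + X θ 0 0 * ζ)
          - X (θ + α) 1 0 * X (θ + α) 0 1 := by rw [h11', ← h10]; ring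
      _ = (X (θ + α) 0 0 * X (θ + α) 1 1 - X (θ + α) 0 1 * X (θ + α) 1 0)
          + ζ * (X θ 0 0 * X (θ + α) 0 0) := by ring
      _ = 1 + ζ * (X θ 0 0 * X (θ + α) 0 0) := by rw [hdet]
  -- periodicity transfer
  have hper : ∀ F : Matrix (Fin 2) (Fin 2) ℝ → ℝ, Z2periodic (fun θ => F (X θ)) := by
    intro F θ n
    simp only
    rw [hXp]
  -- integrability shorthands
  have int00 := integrableOn_box ((hentry 0 0).pow 2)
  have int01 := integrableOn_box ((hentry 0 1).pow 2)
  have int0001 := integrableOn_box ((hentry 0 0).mul (hentry 0 1))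
  have intfag := integrableOn_box ((hentrya 0 0).mul (hentry 0 1))
  have intfga := integrableOn_box ((hentry 0 0).mul (hentrya 0 1))
  have intffa := integrableOn_box ((hentry 0 0).mul (hentrya 0 0))
  -- shifted averages
  have hfa2 : avg2 (fun θ => X (θ + α) 0 0 ^ 2) = A :=
    avg2_shift (hper fun m => m 0 0 ^ 2) α
  have hga2 : avg2 (fun θ => X (θ + α) 0 1 ^ 2) = C :=
    avg2_shift (hper fun m => m 0 1 ^ 2) α
  -- the averaged Wronskian identity
  have hIeq : avg2 (fun θ => X (θ + α) 0 0 * X θ 0 1)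
      - avg2 (fun θ => X θ 0 0 * X (θ + α) 0 1)
      = 1 + ζ * avg2 (fun θ => X θ 0 0 * X (θ + α) 0 0) := by
    have hpt : (fun θ => X (θ + α) 0 0 * X θ 0 1 - X θ 0 0 * X (θ + α) 0 1)
        = fun θ => 1 + ζ * (X θ 0 0 * X (θ + α) 0 0) := by
      funext θ
      exact star θ
    calc avg2 (fun θ => X (θ + α) 0 0 * X θ 0 1)
          - avg2 (fun θ => X θ 0 0 * X (θ + α) 0 1)
        = avg2 (fun θ => X (θ + α) 0 0 * X θ 0 1 - X θ 0 0 * X (θ + α) 0 1) :=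
          (avg2_sub intfag intfga).symm
      _ = avg2 (fun θ => (1:ℝ) + ζ * (X θ 0 0 * X (θ + α) 0 0)) := by rw [hpt]
      _ = avg2 (fun _ => (1:ℝ)) + avg2 (fun θ => ζ * (X θ 0 0 * X (θ + α) 0 0)) :=
          avg2_add (MeasureTheory.integrableOn_const isCompact_Icc.measure_lt_top.ne)
            (integrableOn_box (continuous_const.mul ((hentry 0 0).mul (hentrya 0 0))))
      _ = 1 + ζ * avg2 (fun θ => X θ 0 0 * X (θ + α) 0 0) := by
          rw [avg2_const, avg2_mul_left]
  -- basic bounds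
  have hA_nonneg : 0 ≤ A := avg2_nonneg fun θ => sq_nonneg _
  have hC_nonneg : 0 ≤ C := avg2_nonneg fun θ => sq_nonneg _
  have hA_le : A ≤ M ^ 2 := by
    apply avg2_le int00
    intro θ
    have h := hent_le θ 0 0
    calc X θ 0 0 ^ 2 = |X θ 0 0| ^ 2 := (sq_abs _).symm
      _ ≤ M ^ 2 := pow_le_pow_left₀ (abs_nonneg _) h 2
  have habs_ffa : |avg2 (fun θ => X θ 0 0 * X (θ + α) 0 0)| ≤ M ^ 2 := by
    apply abs_avg2_le intffa
    intro θ
    show |X θ 0 0 * X (θ + α) 0 0| ≤ M ^ 2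
    rw [abs_mul, pow_two]
    exact mul_le_mul (hent_le θ 0 0) (hent_le _ 0 0) (abs_nonneg _) hM_nonneg
  have hI : (15:ℝ)/16 ≤ avg2 (fun θ => X (θ + α) 0 0 * X θ 0 1)
      - avg2 (fun θ => X θ 0 0 * X (θ + α) 0 1) := by
    rw [hIeq]
    have h1 : -(ζ * avg2 (fun θ => X θ 0 0 * X (θ + α) 0 0)) ≤ ζ * M ^ 2 := by
      have hw := (abs_le.mp habs_ffa).1
      have := mul_le_mul_of_nonneg_left hw hζ.le
      linarith only [this]
    linarith only [h1, hζM2]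
  -- A is positive
  have hApos : 0 < A := by
    rcases eq_or_lt_of_le hA_nonneg with hA0 | hApos
    · exfalso
      have c1 : (avg2 (fun θ => X (θ + α) 0 0 * X θ 0 1)) ^ 2 ≤ A * C := by
        have h := avg2_cs (hentrya 0 0) (hentry 0 1)
        rwa [hfa2] at h
      have c2 : (avg2 (fun θ => X θ 0 0 * X (θ + α) 0 1)) ^ 2 ≤ A * C := by
        have h := avg2_cs (hentry 0 0) (hentrya 0 1)
        rwa [hga2] at h
      rw [← hA0] at c1 c2
      have z1 : avg2 (fun θ => X (θ + α) 0 0 * X θ 0 1) = 0 := by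
        have hz : (avg2 (fun θ => X (θ + α) 0 0 * X θ 0 1)) ^ 2 = 0 :=
          le_antisymm (by linarith only [c1]) (sq_nonneg _)
        exact pow_eq_zero_iff (by norm_num : (2:ℕ) ≠ 0) |>.mp hz
      have z2 : avg2 (fun θ => X θ 0 0 * X (θ + α) 0 1) = 0 := by
        have hz : (avg2 (fun θ => X θ 0 0 * X (θ + α) 0 1)) ^ 2 = 0 :=
          le_antisymm (by linarith only [c2]) (sq_nonneg _)
        exact pow_eq_zero_iff (by norm_num : (2:ℕ) ≠ 0) |>.mp hz
      rw [z1, z2] at hI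
      norm_num at hI
    · exact hApos
  -- the least-squares decomposition
  set lam : ℝ := B / A with hlamdef
  have hlamA : lam * A = B := div_mul_cancel₀ B hApos.ne'
  have hucont : Continuous fun θ => X θ 0 1 - lam * X θ 0 0 :=
    (hentry 0 1).sub (continuous_const.mul (hentry 0 0))
  have huacont : Continuous fun θ => X (θ + α) 0 1 - lam * X (θ + α) 0 0 :=
    (hentrya 0 1).sub (continuous_const.mul (hentrya 0 0))
  have intcross : MeasureTheory.IntegrableOn
      (fun θ => (2 * lam) * (X θ 0 0 * X θ 0 1))
      (Set.Icc (0 : Fin d → ℝ) (fun _ => 2)) volume :=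
    integrableOn_box (continuous_const.mul ((hentry 0 0).mul (hentry 0 1)))
  have i2Q : MeasureTheory.IntegrableOn (fun θ => lam ^ 2 * X θ 0 0 ^ 2)
      (Set.Icc (0 : Fin d → ℝ) (fun _ => 2)) volume :=
    integrableOn_box (continuous_const.mul ((hentry 0 0).pow 2))
  have hQ : avg2 (fun θ => (X θ 0 1 - lam * X θ 0 0) ^ 2)
      = C - 2 * lam * B + lam ^ 2 * A := by
    have e0 : avg2 (fun θ => (X θ 0 1 - lam * X θ 0 0) ^ 2)
        = avg2 (fun θ => (X θ 0 1 ^ 2 - (2 * lam) * (X θ 0 0 * X θ 0 1))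
            + lam ^ 2 * X θ 0 0 ^ 2) := by
      congr 1
      funext θ
      ring
    have e1 : avg2 (fun θ => (X θ 0 1 ^ 2 - (2 * lam) * (X θ 0 0 * X θ 0 1))
          + lam ^ 2 * X θ 0 0 ^ 2)
        = avg2 (fun θ => X θ 0 1 ^ 2 - (2 * lam) * (X θ 0 0 * X θ 0 1))
          + avg2 (fun θ => lam ^ 2 * X θ 0 0 ^ 2) :=
      avg2_add (int01.sub intcross) i2Q
    have e2 : avg2 (fun θ => X θ 0 1 ^ 2 - (2 * lam) * (X θ 0 0 * X θ 0 1))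
        = C - avg2 (fun θ => (2 * lam) * (X θ 0 0 * X θ 0 1)) :=
      avg2_sub int01 intcross
    have e3 : avg2 (fun θ => (2 * lam) * (X θ 0 0 * X θ 0 1)) = (2 * lam) * B :=
      avg2_mul_left _ _
    have e4 : avg2 (fun θ => lam ^ 2 * X θ 0 0 ^ 2) = lam ^ 2 * A :=
      avg2_mul_left _ _
    rw [e0, e1, e2, e3, e4]
  have hQa : avg2 (fun θ => (X (θ + α) 0 1 - lam * X (θ + α) 0 0) ^ 2)
      = C - 2 * lam * B + lam ^ 2 * A := by
    have h := avg2_shift (hper fun m => (m 0 1 - lam * m 0 0) ^ 2) α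
    rw [h]
    exact hQ
  have hAQ : A * (C - 2 * lam * B + lam ^ 2 * A) = A * C - B ^ 2 := by
    have h : A * (C - 2 * lam * B + lam ^ 2 * A)
        = A * C - 2 * B * (lam * A) + (lam * A) ^ 2 := by ring
    rw [h, hlamA]
    ring
  -- decompose the Wronskian average
  have intlamffa : MeasureTheory.IntegrableOn
      (fun θ => lam * (X θ 0 0 * X (θ + α) 0 0))
      (Set.Icc (0 : Fin d → ℝ) (fun _ => 2)) volume :=
    integrableOn_box (continuous_const.mul ((hentry 0 0).mul (hentrya 0 0)))
  have hdec1 : avg2 (fun θ => X (θ + α) 0 0 * (X θ 0 1 - lam * X θ 0 0))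
      = avg2 (fun θ => X (θ + α) 0 0 * X θ 0 1)
        - lam * avg2 (fun θ => X θ 0 0 * X (θ + α) 0 0) := by
    have e0 : avg2 (fun θ => X (θ + α) 0 0 * (X θ 0 1 - lam * X θ 0 0))
        = avg2 (fun θ => X (θ + α) 0 0 * X θ 0 1
            - lam * (X θ 0 0 * X (θ + α) 0 0)) := by
      congr 1
      funext θ
      ring
    have e1 : avg2 (fun θ => X (θ + α) 0 0 * X θ 0 1
          - lam * (X θ 0 0 * X (θ + α) 0 0))
        = avg2 (fun θ => X (θ + α) 0 0 * X θ 0 1)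
          - avg2 (fun θ => lam * (X θ 0 0 * X (θ + α) 0 0)) :=
      avg2_sub intfag intlamffa
    have e2 : avg2 (fun θ => lam * (X θ 0 0 * X (θ + α) 0 0))
        = lam * avg2 (fun θ => X θ 0 0 * X (θ + α) 0 0) := avg2_mul_left _ _
    rw [e0, e1, e2]
  have hdec2 : avg2 (fun θ => X θ 0 0 * (X (θ + α) 0 1 - lam * X (θ + α) 0 0))
      = avg2 (fun θ => X θ 0 0 * X (θ + α) 0 1)
        - lam * avg2 (fun θ => X θ 0 0 * X (θ + α) 0 0) := by
    have e0 : avg2 (fun θ => X θ 0 0 * (X (θ + α) 0 1 - lam * X (θ + α) 0 0))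
        = avg2 (fun θ => X θ 0 0 * X (θ + α) 0 1
            - lam * (X θ 0 0 * X (θ + α) 0 0)) := by
      congr 1
      funext θ
      ring
    have e1 : avg2 (fun θ => X θ 0 0 * X (θ + α) 0 1
          - lam * (X θ 0 0 * X (θ + α) 0 0))
        = avg2 (fun θ => X θ 0 0 * X (θ + α) 0 1)
          - avg2 (fun θ => lam * (X θ 0 0 * X (θ + α) 0 0)) :=
      avg2_sub intfga intlamffa
    have e2 : avg2 (fun θ => lam * (X θ 0 0 * X (θ + α) 0 0))
        = lam * avg2 (fun θ => X θ 0 0 * X (θ + α) 0 0) := avg2_mul_left _ _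
    rw [e0, e1, e2]
  -- Cauchy–Schwarz on the decomposed terms
  have cs1 : (avg2 (fun θ => X (θ + α) 0 0 * (X θ 0 1 - lam * X θ 0 0))) ^ 2
      ≤ A * (C - 2 * lam * B + lam ^ 2 * A) := by
    have h := avg2_cs (hentrya 0 0) hucont
    rwa [hfa2, hQ] at h
  have cs2 : (avg2 (fun θ => X θ 0 0 * (X (θ + α) 0 1 - lam * X (θ + α) 0 0))) ^ 2
      ≤ A * (C - 2 * lam * B + lam ^ 2 * A) := by
    have h := avg2_cs (hentry 0 0) huacont
    rwa [hQa] at h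
  -- conclude the determinant lower bound
  have hD : (225:ℝ)/1024 ≤ A * C - B ^ 2 := by
    set x := avg2 (fun θ => X (θ + α) 0 0 * (X θ 0 1 - lam * X θ 0 0)) with hx
    set y := avg2 (fun θ => X θ 0 0 * (X (θ + α) 0 1 - lam * X (θ + α) 0 0)) with hy
    have hxy : avg2 (fun θ => X (θ + α) 0 0 * X θ 0 1)
        - avg2 (fun θ => X θ 0 0 * X (θ + α) 0 1) = x - y := by
      rw [hdec1, hdec2]; ring
    rw [hxy] at hI
    have h4 : (x - y) ^ 2 ≤ 4 * (A * C - B ^ 2) := by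
      rw [← hAQ]
      linarith only [cs1, cs2, sq_nonneg (x + y)]
    have h5 : ((15:ℝ)/16) ^ 2 ≤ (x - y) ^ 2 := by nlinarith only [hI]
    nlinarith only [h4, h5]
  have hDpos : (0:ℝ) < A * C - B ^ 2 := by linarith
  refine ⟨div_pos hApos hDpos, ?_, ?_⟩
  · -- A / D ≤ (1/2) ζ^{-κ}
    rw [div_le_iff₀ hDpos, Real.rpow_neg hζ.le]
    have hinv : (ζ ^ κ)⁻¹ * ζ ^ κ = 1 := inv_mul_cancel₀ hsκpos.ne'
    have hAs : A * ζ ^ κ ≤ 1 / 16 := by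
      rw [hsκ]
      have := mul_le_mul_of_nonneg_right hA_le (sq_nonneg s)
      linarith only [this, hM2s2]
    have hinvpos : (0:ℝ) < (ζ ^ κ)⁻¹ := by positivity
    have hA16 : A ≤ 1 / 16 * (ζ ^ κ)⁻¹ := by
      have h := mul_le_mul_of_nonneg_right hAs hinvpos.le
      have hsim : A * ζ ^ κ * (ζ ^ κ)⁻¹ = A := by
        field_simp
      rw [hsim] at h
      linarith only [h]
    have h2 : (1:ℝ) / 16 * (ζ ^ κ)⁻¹ ≤ 1 / 2 * (ζ ^ κ)⁻¹ * (A * C - B ^ 2) := by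
      have h3 := mul_le_mul_of_nonneg_left hD (by positivity : (0:ℝ) ≤ 1 / 2 * (ζ ^ κ)⁻¹)
      nlinarith only [h3, hinvpos]
    linarith only [hA16, h2]
  · -- 8 ζ^{2κ} ≤ D
    have h2κ : ζ ^ (2 * κ) = (s ^ 2) ^ 2 := by
      rw [← hsκ, ← Real.rpow_natCast (ζ ^ κ) 2, ← Real.rpow_mul hζ.le]
      ring_nf
    have hs2 : s ^ 2 ≤ 1 / 8 := by nlinarith only [hM1, hM2s2, sq_nonneg s]
    rw [h2κ]
    nlinarith only [hs2, hD, sq_nonneg s]
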